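/- For all complex t, q with |t| < 1 and |q| < 1, 1/∏_{j≥0}(1 - t q^j) = ∑_{k≥0} t^k / ((1-q)(1-q^2)···(1-q^k)). -/

import Mathlib

open Finset Filter Complex Topology

noncomputable def eulerD (q : ℂ) (k : ℕ) : ℂ := ∏ j ∈ Finset.range k, (1 - q ^ (j + 1))

lemma euler_factor_ne {q : ℂ} (hq : ‖q‖ < 1) (j : ℕ) : 1 - q ^ (j + 1) ≠ 0 := by
  have h : ‖q ^ (j + 1)‖ < 1 := by
    rw [norm_pow]
    exact pow_lt_one₀ (norm_nonneg q) hq (Nat.succ_ne_zero j)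
  intro h0
  rw [sub_eq_zero] at h0
  rw [← h0] at h
  simp at h

lemma eulerD_ne {q : ℂ} (hq : ‖q‖ < 1) (k : ℕ) : eulerD q k ≠ 0 :=
  Finset.prod_ne_zero_iff.2 fun j _ => euler_factor_ne hq j

lemma eulerD_lb {q : ℂ} (hq : ‖q‖ < 1) : ∃ c > 0, ∀ k, c ≤ ‖eulerD q k‖ := by
  set a : ℕ → ℝ := fun j => ‖q‖ ^ (j + 1) with ha
  have halt : ∀ j, a j < 1 := fun j => pow_lt_one₀ (norm_nonneg q) hq (Nat.succ_ne_zero j)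
  have hapos : ∀ j, 0 < 1 - a j := fun j => by linarith [halt j]
  set g : ℕ → ℝ := fun j => Real.log (1 - a j) with hg
  have hann : ∀ j, 0 ≤ a j := fun j => pow_nonneg (norm_nonneg q) _
  have hgle : ∀ j, g j ≤ 0 := fun j =>
    Real.log_nonpos (by linarith [hapos j]) (by linarith [hann j])
  have hgsum : Summable g := by
    apply Summable.of_norm_bounded (g := fun j => (1 - ‖q‖)⁻¹ * ‖q‖ ^ (j + 1))
    · exact ((summable_geometric_of_lt_one (norm_nonneg q) hq).mul_left _).comp_injective
        (add_left_injective 1)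
    · intro j
      rw [Real.norm_eq_abs, abs_of_nonpos (hgle j), hg]
      have h1 : -Real.log (1 - a j) = Real.log (1 - a j)⁻¹ := (Real.log_inv _).symm
      rw [h1]
      have h2 : Real.log (1 - a j)⁻¹ ≤ (1 - a j)⁻¹ - 1 :=
        Real.log_le_sub_one_of_pos (by simp [hapos j])
      have h3 : (1 - a j)⁻¹ - 1 = a j / (1 - a j) := by
        field_simp [(hapos j).ne']
        ring
      have h4 : a j / (1 - a j) ≤ a j / (1 - ‖q‖) := by
        apply div_le_div_of_nonneg_left (hann j) (by linarith) _
        have : a j ≥ ‖q‖ ^ (j+1) := le_refl _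
        have : ‖q‖ ^ (j + 1) ≤ ‖q‖ := pow_le_of_le_one (norm_nonneg q) hq.le (Nat.succ_ne_zero j)
        simp only [ha]
        linarith
      calc Real.log (1 - a j)⁻¹ ≤ a j / (1 - a j) := by linarith
        _ ≤ a j / (1 - ‖q‖) := h4
        _ = (1 - ‖q‖)⁻¹ * ‖q‖ ^ (j + 1) := by rw [div_eq_inv_mul]
  refine ⟨Real.exp (∑' j, g j), Real.exp_pos _, fun k => ?_⟩
  have h5 : ∑' j, g j ≤ ∑ j ∈ Finset.range k, g j := by
    have := Summable.sum_le_tsum (Finset.range k) (fun i _ => neg_nonneg.2 (hgle i)) hgsum.neg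
    rw [tsum_neg] at this
    simpa using this
  calc Real.exp (∑' j, g j) ≤ Real.exp (∑ j ∈ Finset.range k, g j) := Real.exp_le_exp.2 h5
    _ = ∏ j ∈ Finset.range k, (1 - a j) := by
        rw [Real.exp_sum]
        exact Finset.prod_congr rfl fun j _ => Real.exp_log (hapos j)
    _ ≤ ‖eulerD q k‖ := by
        rw [eulerD, norm_prod]
        apply Finset.prod_le_prod (fun j _ => (hapos j).le)
        intro j _
        calc 1 - a j = ‖(1:ℂ)‖ - ‖q ^ (j+1)‖ := by rw [norm_one, norm_pow]
          _ ≤ ‖1 - q ^ (j + 1)‖ := norm_sub_norm_le _ _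

lemma euler_summable_norm {q : ℂ} {c : ℝ} (hc : 0 < c) (hDc : ∀ k, c ≤ ‖eulerD q k‖)
    {s : ℂ} (hs : ‖s‖ < 1) : Summable fun k => ‖s ^ k / eulerD q k‖ := by
  have hgeo : Summable fun k : ℕ => c⁻¹ * ‖s‖ ^ k :=
    (summable_geometric_of_lt_one (norm_nonneg s) hs).mul_left _
  have key : ∀ k : ℕ, ‖s ^ k / eulerD q k‖ ≤ c⁻¹ * ‖s‖ ^ k := by
    intro k
    rw [norm_div, norm_pow, div_eq_inv_mul]
    have h1 : ‖eulerD q k‖⁻¹ ≤ c⁻¹ := by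
      apply inv_anti₀ hc (hDc k)
    exact mul_le_mul_of_nonneg_right h1 (by positivity)
  exact Summable.of_nonneg_of_le (fun k => norm_nonneg _) key hgeo

lemma euler_summable {q : ℂ} {c : ℝ} (hc : 0 < c) (hDc : ∀ k, c ≤ ‖eulerD q k‖)
    {s : ℂ} (hs : ‖s‖ < 1) : Summable fun k => s ^ k / eulerD q k :=
  Summable.of_norm (f := fun k => s ^ k / eulerD q k) (euler_summable_norm hc hDc hs)

set_option maxHeartbeats 1000000 in
lemma euler_funceq {q : ℂ} (hq : ‖q‖ < 1) {c : ℝ} (hc : 0 < c) (hDc : ∀ k, c ≤ ‖eulerD q k‖)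
    {s : ℂ} (hs : ‖s‖ < 1) :
    (1 - s) * (∑' k : ℕ, s ^ k / eulerD q k) = ∑' k : ℕ, (s * q) ^ k / eulerD q k := by
  have hsq : ‖s * q‖ < 1 := by
    rw [norm_mul]
    calc ‖s‖ * ‖q‖ ≤ ‖s‖ * 1 := by
          exact mul_le_mul_of_nonneg_left hq.le (norm_nonneg s)
      _ = ‖s‖ := mul_one _
      _ < 1 := hs
  have hS : Summable fun k => s ^ k / eulerD q k := euler_summable hc hDc hs
  have hS1 : Summable fun k : ℕ => s ^ (k + 1) / eulerD q (k + 1) :=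
    (summable_nat_add_iff 1).2 hS
  have hS2 : Summable fun k : ℕ => s ^ (k + 1) / eulerD q k := by
    have := hS.mul_left s
    apply this.congr
    intro k
    rw [pow_succ]
    ring
  have hSq : Summable fun k => (s * q) ^ k / eulerD q k := euler_summable hc hDc hsq
  have e1 : ∑' k : ℕ, s ^ k / eulerD q k = 1 + ∑' k : ℕ, s ^ (k + 1) / eulerD q (k + 1) := by
    rw [Summable.tsum_eq_zero_add hS]
    simp [eulerD]
  have e2 : ∑' k : ℕ, (s * q) ^ k / eulerD q k
      = 1 + ∑' k : ℕ, (s * q) ^ (k + 1) / eulerD q (k + 1) := by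
    rw [Summable.tsum_eq_zero_add hSq]
    simp [eulerD]
  have e3 : s * (∑' k : ℕ, s ^ k / eulerD q k) = ∑' k : ℕ, s ^ (k + 1) / eulerD q k := by
    rw [← tsum_mul_left]
    apply tsum_congr
    intro k
    rw [pow_succ]
    ring
  have e4 : ∀ k : ℕ, s ^ (k + 1) / eulerD q (k + 1) - s ^ (k + 1) / eulerD q k
      = (s * q) ^ (k + 1) / eulerD q (k + 1) := by
    intro k
    have hD : eulerD q (k + 1) = eulerD q k * (1 - q ^ (k + 1)) := Finset.prod_range_succ _ _
    have h1 : eulerD q k ≠ 0 := eulerD_ne hq k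
    have h2 : (1 : ℂ) - q ^ (k + 1) ≠ 0 := euler_factor_ne hq k
    rw [hD, mul_pow]
    field_simp
    ring
  calc (1 - s) * (∑' k : ℕ, s ^ k / eulerD q k)
      = (∑' k : ℕ, s ^ k / eulerD q k) - s * (∑' k : ℕ, s ^ k / eulerD q k) := by ring
    _ = 1 + ((∑' k : ℕ, s ^ (k + 1) / eulerD q (k + 1))
          - ∑' k : ℕ, s ^ (k + 1) / eulerD q k) := by
        rw [e3, e1]; ring
    _ = 1 + ∑' k : ℕ, (s * q) ^ (k + 1) / eulerD q (k + 1) := by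
        rw [← Summable.tsum_sub hS1 hS2]
        congr 1
        exact tsum_congr e4
    _ = ∑' k : ℕ, (s * q) ^ k / eulerD q k := e2.symm

lemma euler_tail_bound {q : ℂ} {c : ℝ} (hc : 0 < c) (hDc : ∀ k, c ≤ ‖eulerD q k‖)
    {t s : ℂ} (ht : ‖t‖ < 1) (hst : ‖s‖ ≤ ‖t‖) :
    ‖(∑' k : ℕ, s ^ k / eulerD q k) - 1‖ ≤ ‖s‖ * (c⁻¹ * (1 - ‖t‖)⁻¹) := by
  have hs : ‖s‖ < 1 := lt_of_le_of_lt hst ht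
  have hS := euler_summable hc hDc hs
  have e1 : (∑' k : ℕ, s ^ k / eulerD q k) - 1 = ∑' k : ℕ, s ^ (k + 1) / eulerD q (k + 1) := by
    rw [Summable.tsum_eq_zero_add hS]
    simp [eulerD]
  rw [e1]
  have hnorm : Summable fun k : ℕ => ‖s ^ (k + 1) / eulerD q (k + 1)‖ :=
    (summable_nat_add_iff 1).2 (euler_summable_norm hc hDc hs)
  have hgeo : Summable fun k : ℕ => ‖s‖ * ‖t‖ ^ k * c⁻¹ := by
    apply Summable.congr (((summable_geometric_of_lt_one (norm_nonneg t) ht).mul_left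
      ‖s‖).mul_right c⁻¹)
    intro k; ring
  have hterm : ∀ k : ℕ, ‖s ^ (k + 1) / eulerD q (k + 1)‖ ≤ ‖s‖ * ‖t‖ ^ k * c⁻¹ := by
    intro k
    rw [norm_div, norm_pow, div_eq_mul_inv]
    have h1 : ‖eulerD q (k + 1)‖⁻¹ ≤ c⁻¹ := inv_anti₀ hc (hDc _)
    have h2 : ‖s‖ ^ (k + 1) ≤ ‖s‖ * ‖t‖ ^ k := by
      rw [pow_succ']
      exact mul_le_mul_of_nonneg_left (pow_le_pow_left₀ (norm_nonneg s) hst k) (norm_nonneg s)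
    exact mul_le_mul h2 h1 (by positivity) (by positivity)
  calc ‖∑' k : ℕ, s ^ (k + 1) / eulerD q (k + 1)‖
      ≤ ∑' k : ℕ, ‖s ^ (k + 1) / eulerD q (k + 1)‖ := norm_tsum_le_tsum_norm hnorm
    _ ≤ ∑' k : ℕ, ‖s‖ * ‖t‖ ^ k * c⁻¹ := Summable.tsum_le_tsum hterm hnorm hgeo
    _ = ‖s‖ * c⁻¹ * ∑' k : ℕ, ‖t‖ ^ k := by
        rw [← tsum_mul_left]
        apply tsum_congr; intro k; ring
    _ = ‖s‖ * (c⁻¹ * (1 - ‖t‖)⁻¹) := by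
        rw [tsum_geometric_of_lt_one (norm_nonneg t) ht]
        ring

/-- Euler's identity: `1/(t;q)_∞ = ∑_k t^k / (q;q)_k` for `|t|,|q| < 1`. -/
theorem euler_inv_qPochhammer_expansion (t q : ℂ) (ht : ‖t‖ < 1) (hq : ‖q‖ < 1) :
    (∏' j : ℕ, (1 - t * q ^ j))⁻¹ =
      ∑' k : ℕ, t ^ k / ∏ j ∈ Finset.range k, (1 - q ^ (j + 1)) := by
  show (∏' j : ℕ, (1 - t * q ^ j))⁻¹ = ∑' k : ℕ, t ^ k / eulerD q k
  obtain ⟨c, hc, hDc⟩ := eulerD_lb hq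
  set F : ℂ → ℂ := fun s => ∑' k : ℕ, s ^ k / eulerD q k with hF
  have hts : ∀ n : ℕ, ‖t * q ^ n‖ ≤ ‖t‖ := fun n => by
    rw [norm_mul, norm_pow]
    exact mul_le_of_le_one_right (norm_nonneg t) (pow_le_one₀ (norm_nonneg q) hq.le)
  have htslt : ∀ n : ℕ, ‖t * q ^ n‖ < 1 := fun n => lt_of_le_of_lt (hts n) ht
  have hfne : ∀ j : ℕ, (1 : ℂ) - t * q ^ j ≠ 0 := by
    intro j h0
    rw [sub_eq_zero] at h0
    have := htslt j
    rw [← h0] at this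
    simp at this
  -- the key induction
  have hkey : ∀ n : ℕ, (∏ j ∈ Finset.range n, (1 - t * q ^ j)) * F t = F (t * q ^ n) := by
    intro n
    induction n with
    | zero => simp
    | succ n ih =>
      rw [Finset.prod_range_succ]
      calc (∏ j ∈ Finset.range n, (1 - t * q ^ j)) * (1 - t * q ^ n) * F t
          = (1 - t * q ^ n) * ((∏ j ∈ Finset.range n, (1 - t * q ^ j)) * F t) := by ring
        _ = (1 - t * q ^ n) * F (t * q ^ n) := by rw [ih]
        _ = F (t * q ^ n * q) := euler_funceq hq hc hDc (htslt n)
        _ = F (t * q ^ (n + 1)) := by rw [show t * q ^ n * q = t * q ^ (n + 1) by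
              rw [pow_succ]; ring]
  -- multipliability
  have hmult : Multipliable fun j : ℕ => 1 - t * q ^ j := by
    have hlog : Summable fun j : ℕ => Complex.log (1 - t * q ^ j) := by
      obtain ⟨N, hN⟩ : ∃ N : ℕ, ‖t‖ * ‖q‖ ^ N ≤ 1 / 2 := by
        have h0 : Tendsto (fun n : ℕ => ‖t‖ * ‖q‖ ^ n) atTop (𝓝 0) := by
          simpa using (tendsto_pow_atTop_nhds_zero_of_lt_one (norm_nonneg q) hq).const_mul ‖t‖
        exact (h0.eventually (eventually_le_nhds (by norm_num : (0:ℝ) < 1 / 2))).exists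
      rw [← summable_nat_add_iff N]
      apply Summable.of_norm_bounded (g := fun j => 3 / 2 * (‖t‖ * ‖q‖ ^ N) * ‖q‖ ^ j)
      · exact (summable_geometric_of_lt_one (norm_nonneg q) hq).mul_left _
      · intro j
        have hb : ‖-(t * q ^ (j + N))‖ ≤ 1 / 2 := by
          rw [norm_neg, norm_mul, norm_pow, pow_add]
          calc ‖t‖ * (‖q‖ ^ j * ‖q‖ ^ N) = ‖t‖ * ‖q‖ ^ N * ‖q‖ ^ j := by ring
            _ ≤ 1 / 2 * 1 := mul_le_mul hN (pow_le_one₀ (norm_nonneg q) hq.le)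
                (by positivity) (by norm_num)
            _ = 1 / 2 := by norm_num
        have hlb := Complex.norm_log_one_add_half_le_self hb
        rw [show (1 : ℂ) + -(t * q ^ (j + N)) = 1 - t * q ^ (j + N) by ring] at hlb
        calc ‖Complex.log (1 - t * q ^ (j + N))‖ ≤ 3 / 2 * ‖-(t * q ^ (j + N))‖ := hlb
          _ = 3 / 2 * (‖t‖ * ‖q‖ ^ N) * ‖q‖ ^ j := by
              rw [norm_neg, norm_mul, norm_pow, pow_add]; ring
    exact Complex.multipliable_of_summable_log hlog
  -- limits
  have hlim1 : Tendsto (fun n : ℕ => F (t * q ^ n)) atTop (𝓝 1) := by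
    rw [tendsto_iff_norm_sub_tendsto_zero]
    apply squeeze_zero (fun n => norm_nonneg _)
      (g := fun n => ‖t‖ * (c⁻¹ * (1 - ‖t‖)⁻¹) * ‖q‖ ^ n)
    · intro n
      calc ‖F (t * q ^ n) - 1‖ ≤ ‖t * q ^ n‖ * (c⁻¹ * (1 - ‖t‖)⁻¹) :=
            euler_tail_bound hc hDc ht (hts n)
        _ = ‖t‖ * (c⁻¹ * (1 - ‖t‖)⁻¹) * ‖q‖ ^ n := by
            rw [norm_mul, norm_pow]; ring
    · simpa using (tendsto_pow_atTop_nhds_zero_of_lt_one (norm_nonneg q) hq).const_mul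
        (‖t‖ * (c⁻¹ * (1 - ‖t‖)⁻¹))
  have hlim2 : Tendsto (fun n : ℕ => (∏ j ∈ Finset.range n, (1 - t * q ^ j)) * F t) atTop
      (𝓝 ((∏' j : ℕ, (1 - t * q ^ j)) * F t)) :=
    hmult.hasProd.tendsto_prod_nat.mul_const _
  have heq : (∏' j : ℕ, (1 - t * q ^ j)) * F t = 1 :=
    tendsto_nhds_unique (hlim2.congr hkey) hlim1
  exact inv_eq_of_mul_eq_one_right heq
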